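/- Let X be an integer-valued random variable with characteristic function φ(t) = E[e^{itX}]. Then sup_x P(X = x) ≤ (96/95)² (2/π) ∫_{-π/2}^{π/2} |φ(t)| dt. -/

import Mathlib

open MeasureTheory Set Complex


lemma A1 (k : ℝ) (hk : k ≠ 0) :
    ∫ t in (0:ℝ)..(Real.pi/2), ((Real.pi/2 - t : ℝ):ℂ) * Complex.exp (Complex.I * t * k)
      = (1 - Complex.exp (Complex.I * (Real.pi/2) * k)) / (k:ℂ)^2 + (Real.pi/2) * Complex.I / k := by
  set K : ℂ := Complex.I * k with hKdef
  have hk' : (k:ℂ) ≠ 0 := Complex.ofReal_ne_zero.mpr hk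
  have hK : K ≠ 0 := mul_ne_zero Complex.I_ne_zero hk'
  have harg : ∀ t : ℝ, Complex.I * (t:ℂ) * (k:ℂ) = K * t := fun t => by rw [hKdef]; ring
  set F : ℝ → ℂ := fun t => ((Real.pi/2 - t :ℝ):ℂ) * Complex.exp (K * t)/K + Complex.exp (K*t)/K^2 with hFdef
  have hderiv : ∀ t ∈ Set.uIcc (0:ℝ) (Real.pi/2), HasDerivAt F (((Real.pi/2 - t:ℝ):ℂ) * Complex.exp (Complex.I * t * k)) t := by
    intro t _
    have hid : HasDerivAt (fun s:ℝ => (s:ℂ)) 1 t := by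
      simpa using (hasDerivAt_id t).ofReal_comp
    have hexp : HasDerivAt (fun s:ℝ => Complex.exp (K*s)) (Complex.exp (K*t) * K) t := by
      simpa using (hid.const_mul K).cexp
    have hlin : HasDerivAt (fun s:ℝ => ((Real.pi/2 :ℝ):ℂ) - s) (-1) t := by
      simpa using (hid.const_sub ((Real.pi/2 :ℝ):ℂ))
    have := (((hlin.mul hexp).div_const K).add (hexp.div_const (K^2)))
    convert this using 1
    · rfl
    · ext s; simp only [hFdef, Pi.add_apply, Pi.mul_apply]; push_cast; ring
    · rw [harg]; push_cast; field_simp; ring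
  have hcont : Continuous (fun t:ℝ => ((Real.pi/2 - t : ℝ):ℂ) * Complex.exp (Complex.I * t * k)) := by
    fun_prop
  have := intervalIntegral.integral_eq_sub_of_hasDerivAt hderiv (hcont.intervalIntegrable _ _)
  rw [this]
  simp only [hFdef]
  rw [show Complex.I * ((Real.pi:ℂ)/2) * k = K * ((Real.pi/2 : ℝ):ℂ) from by rw [hKdef]; push_cast; ring]
  push_cast
  rw [hKdef]
  have hI2 : (Complex.I)^2 = -1 := Complex.I_sq
  field_simp
  have h3 : (Complex.I)^3 = -Complex.I := by rw [pow_succ, Complex.I_sq]; ring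
  have h4 : (Complex.I)^4 = 1 := by rw [pow_succ, h3]; simp [Complex.I_mul_I]
  have h5 : (Complex.I)^5 = Complex.I := by rw [pow_succ, h4, one_mul]
  have h6 : (Complex.I)^6 = -1 := by rw [pow_succ, h5, Complex.I_mul_I]
  ring_nf
  simp only [hI2, Complex.exp_zero]
  ring_nf; simp only [h3]; ring


noncomputable def cfn (m : ℝ) : ℝ :=
  if m = 0 then Real.pi ^ 2 / 4 else (2 - 2 * Real.cos (Real.pi / 2 * m)) / m ^ 2

lemma cfn_nonneg (m : ℝ) : 0 ≤ cfn m := by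
  unfold cfn
  split
  · positivity
  · have h1 := Real.cos_le_one (Real.pi / 2 * m)
    have h2 : (0:ℝ) ≤ 2 - 2 * Real.cos (Real.pi/2*m) := by linarith
    positivity

lemma cfn_int_le (n : ℤ) : cfn (n : ℝ) ≤ 4 := by
  unfold cfn
  split
  · nlinarith [Real.pi_lt_d2, Real.pi_pos]
  · rename_i h
    have hn0 : n ≠ 0 := fun hn => h (by exact_mod_cast hn)
    have h1 : (1:ℤ) ≤ |n| := Int.one_le_abs hn0
    have h1' : (1:ℝ) ≤ |(n:ℝ)| := by exact_mod_cast h1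
    have hsq : (1:ℝ) ≤ (n:ℝ)^2 := by nlinarith [abs_nonneg (n:ℝ), _root_.sq_abs (n:ℝ)]
    have hc := Real.neg_one_le_cos (Real.pi / 2 * (n:ℝ))
    rw [div_le_iff₀ (by nlinarith)]
    nlinarith

lemma gInt (m : ℝ) :
    (∫ t in Set.Ioc (-(Real.pi/2)) (Real.pi/2), ((Real.pi/2 - |t| : ℝ):ℂ) * Complex.exp (Complex.I * t * m))
      = ((cfn m : ℝ) : ℂ) := by
  have hle : -(Real.pi/2) ≤ Real.pi/2 := by linarith [Real.pi_pos]
  have hle0 : -(Real.pi/2) ≤ (0:ℝ) := by linarith [Real.pi_pos]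
  have hle0' : (0:ℝ) ≤ Real.pi/2 := by linarith [Real.pi_pos]
  have hcont : Continuous (fun t:ℝ => ((Real.pi/2 - |t| : ℝ):ℂ) * Complex.exp (Complex.I * t * m)) := by
    fun_prop
  rw [← intervalIntegral.integral_of_le hle,
    ← intervalIntegral.integral_add_adjacent_intervals (a := -(Real.pi/2)) (b := 0) (c := Real.pi/2)
      (hcont.intervalIntegrable _ _) (hcont.intervalIntegrable _ _)]
  have hR : (∫ t in (0:ℝ)..(Real.pi/2), ((Real.pi/2 - |t| : ℝ):ℂ) * Complex.exp (Complex.I * t * m))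
      = ∫ t in (0:ℝ)..(Real.pi/2), ((Real.pi/2 - t : ℝ):ℂ) * Complex.exp (Complex.I * t * m) := by
    apply intervalIntegral.integral_congr
    intro t ht
    rw [Set.uIcc_of_le hle0'] at ht
    dsimp only
    rw [_root_.abs_of_nonneg ht.1]
  have hL : (∫ t in (-(Real.pi/2))..(0:ℝ), ((Real.pi/2 - |t| : ℝ):ℂ) * Complex.exp (Complex.I * t * m))
      = ∫ t in (0:ℝ)..(Real.pi/2), ((Real.pi/2 - t : ℝ):ℂ) * Complex.exp (Complex.I * t * (-m)) := by
    have := intervalIntegral.integral_comp_neg (a := -(Real.pi/2)) (b := 0)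
      (fun t : ℝ => ((Real.pi/2 - t : ℝ):ℂ) * Complex.exp (Complex.I * t * (-m)))
    rw [neg_neg, neg_zero] at this
    rw [← this]
    apply intervalIntegral.integral_congr
    intro t ht
    rw [Set.uIcc_of_le hle0] at ht
    dsimp only
    rw [_root_.abs_of_nonpos ht.2]
    push_cast
    ring_nf
  rw [hR, hL]
  by_cases hm : m = 0
  · subst hm
    simp only [Complex.ofReal_zero, mul_zero, Complex.exp_zero, mul_one, neg_zero]
    rw [intervalIntegral.integral_ofReal]
    have e1 : (∫ t in (0:ℝ)..(Real.pi/2), (Real.pi/2 - t)) = Real.pi^2/8 := by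
      rw [intervalIntegral.integral_sub intervalIntegrable_const intervalIntegral.intervalIntegrable_id,
        intervalIntegral.integral_const, integral_id]
      simp
      ring
    rw [e1]
    unfold cfn
    simp
    push_cast
    ring
  · have hA2 := A1 (-m) (by simpa using hm)
    simp only [Complex.ofReal_neg] at hA2
    rw [A1 m hm, hA2]
    unfold cfn
    rw [if_neg hm]
    have hexp : Complex.exp (Complex.I * ((Real.pi:ℂ)/2) * (-(m:ℂ)))
        = 2 * ((Real.cos (Real.pi/2 * m) : ℝ) : ℂ) - Complex.exp (Complex.I * ((Real.pi:ℂ)/2) * (m:ℂ)) := by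
      have h1 : Complex.I * ((Real.pi:ℂ)/2) * (m:ℂ) = ((Real.pi/2*m : ℝ):ℂ) * Complex.I := by
        push_cast; ring
      have h2 : Complex.I * ((Real.pi:ℂ)/2) * (-(m:ℂ)) = ((-(Real.pi/2*m) : ℝ):ℂ) * Complex.I := by
        push_cast; ring
      rw [h1, h2, Complex.exp_mul_I, Complex.exp_mul_I]
      push_cast
      simp [Real.cos_neg, Real.sin_neg]
      ring
    rw [hexp]
    have hm' : (m:ℂ) ≠ 0 := Complex.ofReal_ne_zero.mpr hm
    push_cast
    field_simp
    ring

lemma cfn_zero : cfn 0 = Real.pi ^ 2 / 4 := by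
  unfold cfn; simp

theorem stmt4 {Ω : Type*} [MeasurableSpace Ω] (μ : Measure Ω) [IsProbabilityMeasure μ]
    (X : Ω → ℤ) (hX : Measurable X) (x : ℤ) :
    (μ {ω | X ω = x}).toReal ≤
      (96 / 95 : ℝ) ^ 2 * (2 / Real.pi) *
        ∫ t in Set.Ioc (-(Real.pi / 2)) (Real.pi / 2),
          ‖∫ ω, Complex.exp (Complex.I * t * (X ω : ℂ)) ∂μ‖ := by
  have hπ := Real.pi_pos
  set S : Set ℝ := Set.Ioc (-(Real.pi / 2)) (Real.pi / 2) with hSdef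
  have hSm : MeasurableSet S := measurableSet_Ioc
  haveI : IsFiniteMeasure (volume.restrict S) :=
    ⟨by rw [Measure.restrict_apply_univ]; exact measure_Ioc_lt_top⟩
  set m : Ω → ℝ := fun ω => ((X ω - x : ℤ) : ℝ) with hmdef
  set f : ℝ → Ω → ℂ :=
    fun t ω => ((Real.pi/2 - |t| : ℝ):ℂ) * Complex.exp (Complex.I * t * ((m ω : ℝ):ℂ)) with hfdef
  set φ : ℝ → ℂ := fun t => ∫ ω, Complex.exp (Complex.I * t * (X ω : ℂ)) ∂μ with hφdef
  set p : ℝ := (μ {ω | X ω = x}).toReal with hpdef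
  set Ia : ℝ := ∫ t in S, ‖φ t‖ with hIadef
  -- measurability facts
  have hmz : Measurable fun ω : Ω => ((m ω : ℝ):ℂ) := by
    have : Continuous fun z : ℤ => (((z - x : ℤ) : ℝ) : ℂ) := continuous_of_discreteTopology
    exact this.measurable.comp hX
  have hXc : Measurable fun ω : Ω => ((X ω : ℤ):ℂ) := by
    have : Continuous fun z : ℤ => ((z : ℤ) : ℂ) := continuous_of_discreteTopology
    exact this.measurable.comp hX
  have hfmeas : Measurable fun q : ℝ × Ω => f q.1 q.2 := by
    apply Measurable.mul
    · exact Complex.measurable_ofReal.comp (measurable_const.sub measurable_fst.abs)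
    · exact Complex.measurable_exp.comp
        (((measurable_const.mul (Complex.measurable_ofReal.comp measurable_fst)).mul
          (hmz.comp measurable_snd)))
  have hEmeas : Measurable fun q : ℝ × Ω => Complex.exp (Complex.I * q.1 * (X q.2 : ℂ)) := by
    exact Complex.measurable_exp.comp
      (((measurable_const.mul (Complex.measurable_ofReal.comp measurable_fst)).mul
        (hXc.comp measurable_snd)))
  have hφmeas : AEStronglyMeasurable φ (volume.restrict S) := by
    rw [hφdef]
    exact (hEmeas.stronglyMeasurable.integral_prod_right').aestronglyMeasurable
  have habs1 : ∀ (t : ℝ) (ω : Ω), ‖Complex.exp (Complex.I * t * (X ω : ℂ))‖ = 1 := by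
    intro t ω
    rw [show Complex.I * (t:ℂ) * ((X ω : ℤ):ℂ) = (((t * ((X ω : ℤ):ℝ)):ℝ):ℂ) * Complex.I by
      push_cast; ring]
    exact Complex.norm_exp_ofReal_mul_I _
  have habs2 : ∀ (t : ℝ) (ω : Ω), ‖Complex.exp (Complex.I * t * ((m ω : ℝ):ℂ))‖ = 1 := by
    intro t ω
    rw [show Complex.I * (t:ℂ) * ((m ω : ℝ):ℂ) = (((t * m ω):ℝ):ℂ) * Complex.I by
      push_cast; ring]
    exact Complex.norm_exp_ofReal_mul_I _
  have hφle : ∀ t : ℝ, ‖φ t‖ ≤ 1 := by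
    intro t
    calc ‖φ t‖ ≤ 1 * (μ Set.univ).toReal := by
          refine norm_integral_le_of_norm_le_const (ae_of_all _ fun ω => ?_)
          rw [habs1]
      _ = 1 := by simp
  have hIaInt : Integrable (fun t => ‖φ t‖) (volume.restrict S) := by
    have heq : (fun t => ‖φ t‖) = fun t => ‖φ t‖ := by
      rfl
    rw [heq]
    refine Integrable.mono' (integrable_const 1) hφmeas.norm (ae_of_all _ fun t => ?_)
    rw [Real.norm_eq_abs, _root_.abs_of_nonneg (norm_nonneg _)]
    exact hφle t
  have hIa0 : 0 ≤ Ia := by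
    rw [hIadef]; exact integral_nonneg fun t => norm_nonneg _
  -- Fubini
  have haeS : ∀ᵐ q : ℝ × Ω ∂((volume.restrict S).prod μ), q.1 ∈ S := by
    rw [ae_iff]
    have hset : {q : ℝ × Ω | ¬ q.1 ∈ S} = Sᶜ ×ˢ (Set.univ : Set Ω) := by
      ext q; simp
    rw [hset, Measure.prod_prod, Measure.restrict_apply hSm.compl]
    simp
  have hFint : Integrable (Function.uncurry f) ((volume.restrict S).prod μ) := by
    refine Integrable.mono' (integrable_const (Real.pi/2)) hfmeas.aestronglyMeasurable ?_
    filter_upwards [haeS] with q hq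
    have h1 : |q.1| ≤ Real.pi/2 := abs_le.2 ⟨le_of_lt hq.1, hq.2⟩
    rw [Function.uncurry, hfdef]
    rw [norm_mul, habs2, mul_one, Complex.norm_real, Real.norm_eq_abs,
      _root_.abs_of_nonneg (by linarith : (0:ℝ) ≤ Real.pi/2 - |q.1|)]
    linarith [abs_nonneg q.1]
  have hswap := MeasureTheory.integral_integral_swap hFint
  have hright : (∫ ω, (∫ t in S, f t ω) ∂μ) = ((∫ ω, cfn (m ω) ∂μ : ℝ) : ℂ) := by
    rw [show (∫ ω, (∫ t in S, f t ω) ∂μ) = ∫ ω, ((cfn (m ω) : ℝ) : ℂ) ∂μ from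
      integral_congr_ae (ae_of_all _ fun ω => gInt (m ω))]
    exact integral_ofReal
  have hinner : ∀ t : ℝ, (∫ ω, f t ω ∂μ) =
      (((Real.pi/2 - |t| : ℝ):ℂ) * Complex.exp (Complex.I * t * (-(x:ℂ)))) * φ t := by
    intro t
    rw [hφdef, ← integral_const_mul]
    refine integral_congr_ae (ae_of_all _ fun ω => ?_)
    have e : Complex.I * (t:ℂ) * ((m ω : ℝ):ℂ) =
        (Complex.I * (t:ℂ) * -(x:ℂ)) + Complex.I * (t:ℂ) * ((X ω : ℤ):ℂ) := by
      rw [hmdef]; push_cast; ring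
    rw [hfdef]
    dsimp only
    rw [e, Complex.exp_add]
    ring
  have hcfnInt : Integrable (fun ω => cfn (m ω)) μ := by
    refine Integrable.mono' (integrable_const 4) ?_ (ae_of_all _ fun ω => ?_)
    · have : Continuous fun z : ℤ => cfn (((z - x : ℤ) : ℝ)) := continuous_of_discreteTopology
      exact (this.measurable.comp hX).aestronglyMeasurable
    · rw [Real.norm_eq_abs, _root_.abs_of_nonneg (cfn_nonneg _)]
      rw [hmdef]
      exact cfn_int_le _
  have hsm : MeasurableSet {ω | X ω = x} := hX (MeasurableSet.singleton x)
  have hlower : Real.pi^2/4 * p ≤ ∫ ω, cfn (m ω) ∂μ := by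
    have h1 : (∫ ω in {ω | X ω = x}, cfn (m ω) ∂μ) = Real.pi^2/4 * p := by
      rw [setIntegral_congr_fun hsm (g := fun _ => Real.pi^2/4) (fun ω hω => by
        rw [hmdef]; dsimp only
        have : X ω = x := hω
        rw [this]; simp [cfn_zero])]
      rw [setIntegral_const, smul_eq_mul, mul_comm, hpdef, measureReal_def]
    rw [← h1]
    exact setIntegral_le_integral hcfnInt (ae_of_all _ fun ω => cfn_nonneg _)
  have hptwise : ∀ t ∈ S, ‖∫ ω, f t ω ∂μ‖ ≤ (Real.pi/2) * ‖φ t‖ := by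
    intro t ht
    have h1 : |t| ≤ Real.pi/2 := abs_le.2 ⟨le_of_lt ht.1, ht.2⟩
    rw [hinner t, norm_mul, norm_mul, Complex.norm_real, Real.norm_eq_abs,
      _root_.abs_of_nonneg (by linarith : (0:ℝ) ≤ Real.pi/2 - |t|)]
    have h2 : ‖Complex.exp (Complex.I * t * (-(x:ℂ)))‖ = 1 := by
      rw [show Complex.I * (t:ℂ) * (-(x:ℂ)) = (((-(t * ((x:ℤ):ℝ))):ℝ):ℂ) * Complex.I by
        push_cast; ring]
      exact Complex.norm_exp_ofReal_mul_I _
    rw [h2, mul_one]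
    exact mul_le_mul_of_nonneg_right (by linarith [abs_nonneg t]) (norm_nonneg _)
  have hInt1 : Integrable (fun t => ‖∫ ω, f t ω ∂μ‖) (volume.restrict S) := by
    refine Integrable.mono' (integrable_const (Real.pi/2))
      ((hfmeas.stronglyMeasurable.integral_prod_right').aestronglyMeasurable.norm)
      ?_
    filter_upwards [ae_restrict_mem hSm] with t ht
    rw [Real.norm_eq_abs, _root_.abs_of_nonneg (norm_nonneg _)]
    calc ‖∫ ω, f t ω ∂μ‖ ≤ (Real.pi/2) * ‖φ t‖ := hptwise t ht
      _ ≤ (Real.pi/2) * 1 := by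
          exact mul_le_mul_of_nonneg_left (hφle t) (by linarith)
      _ = Real.pi/2 := mul_one _
  have hupper : (∫ ω, cfn (m ω) ∂μ) ≤ (Real.pi/2) * Ia := by
    calc (∫ ω, cfn (m ω) ∂μ) = (∫ t in S, (∫ ω, f t ω ∂μ)).re := by
          rw [hswap, hright, Complex.ofReal_re]
      _ ≤ ‖∫ t in S, (∫ ω, f t ω ∂μ)‖ := Complex.re_le_norm _
      _ = ‖∫ t in S, (∫ ω, f t ω ∂μ)‖ := rfl
      _ ≤ ∫ t in S, ‖∫ ω, f t ω ∂μ‖ := norm_integral_le_integral_norm _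
      _ ≤ ∫ t in S, (Real.pi/2) * ‖φ t‖ :=
          setIntegral_mono_on hInt1 (hIaInt.const_mul _) hSm hptwise
      _ = (Real.pi/2) * Ia := by rw [hIadef, integral_const_mul]
  have hfinal : Real.pi^2/4 * p ≤ Real.pi/2 * Ia := le_trans hlower hupper
  have hp2 : p ≤ 2/Real.pi * Ia := by
    have h4 : Real.pi * (Real.pi * p) ≤ Real.pi * (2 * Ia) := by nlinarith [hfinal]
    have h5 : Real.pi * p ≤ 2 * Ia := le_of_mul_le_mul_left h4 hπ
    rw [div_mul_eq_mul_div, le_div_iff₀ hπ]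
    linarith [mul_comm p Real.pi]
  show p ≤ (96 / 95 : ℝ) ^ 2 * (2 / Real.pi) * Ia
  have h95 : (1:ℝ) ≤ (96/95:ℝ)^2 := by norm_num
  calc p ≤ 2/Real.pi * Ia := hp2
    _ ≤ (96/95:ℝ)^2 * (2/Real.pi * Ia) := le_mul_of_one_le_left (by positivity) h95
    _ = (96 / 95 : ℝ) ^ 2 * (2 / Real.pi) * Ia := by ring
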